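/- Let w : [0,R] → ℝ be continuous with w(r) > 0 for r > 0, and let u₁ be a positive decreasing function on [0,R]. Define h(r) = (∫₀^r w(s)^{m-1} ds) / (∫₀^r w(s)^{m-1} u₁(s) ds) for r ∈ (0,R]. Then h is monotone non-decreasing on (0,R]. -/
import Mathlib


open Set intervalIntegral MeasureTheory Topology

/-- the quotient h(r) = (∫₀^r w^{m-1}) / (∫₀^r w^{m-1} u₁) is
monotone non-decreasing on (0,R]. -/
theorem stmt_0 (m : ℕ) (hm : 1 ≤ m) (R : ℝ) (hR : 0 < R)
    (w u₁ : ℝ → ℝ)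
    (hw : ContinuousOn w (Set.Icc 0 R))
    (hwpos : ∀ r ∈ Set.Ioc (0:ℝ) R, 0 < w r)
    (hu₁pos : ∀ r ∈ Set.Icc (0:ℝ) R, 0 < u₁ r)
    (hu₁dec : AntitoneOn u₁ (Set.Icc 0 R)) :
    MonotoneOn (fun r => (∫ s in (0:ℝ)..r, w s ^ (m - 1)) /
      (∫ s in (0:ℝ)..r, w s ^ (m - 1) * u₁ s)) (Set.Ioc 0 R) := by
  set f : ℝ → ℝ := fun s => w s ^ (m - 1) with hf
  have hwnonneg : ∀ s ∈ Icc (0:ℝ) R, 0 ≤ w s := by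
    intro s hs
    rcases eq_or_lt_of_le hs.1 with h0 | h0
    · have ht : Filter.Tendsto w (nhdsWithin 0 (Ioc 0 R)) (nhds (w 0)) :=
        (hw 0 (left_mem_Icc.mpr hR.le)).mono Ioc_subset_Icc_self
      have : (𝓝[Ioc (0:ℝ) R] 0).NeBot := left_nhdsWithin_Ioc_neBot hR
      have h := ge_of_tendsto ht
        (Filter.eventually_of_mem self_mem_nhdsWithin fun x hx => (hwpos x hx).le)
      rw [← h0]; exact h
    · exact (hwpos s ⟨h0, hs.2⟩).le
  have hfnonneg : ∀ s ∈ Icc (0:ℝ) R, 0 ≤ f s := fun s hs => pow_nonneg (hwnonneg s hs) _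
  have hfcont : ContinuousOn f (Icc 0 R) := hw.pow _
  have hfint : ∀ a b, a ∈ Icc (0:ℝ) R → b ∈ Icc (0:ℝ) R →
      IntervalIntegrable f volume a b := by
    intro a b ha hb
    exact (hfcont.mono (uIcc_subset_Icc ha hb)).intervalIntegrable
  have hgint : ∀ a b, a ∈ Icc (0:ℝ) R → b ∈ Icc (0:ℝ) R →
      IntervalIntegrable (fun s => f s * u₁ s) volume a b := by
    intro a b ha hb
    have hu : IntervalIntegrable u₁ volume a b :=
      (hu₁dec.mono (uIcc_subset_Icc ha hb)).intervalIntegrable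
    exact hu.continuousOn_mul (hfcont.mono (uIcc_subset_Icc ha hb))
  have hBpos : ∀ r ∈ Ioc (0:ℝ) R, 0 < ∫ s in (0:ℝ)..r, f s * u₁ s := by
    intro r hr
    refine intervalIntegral_pos_of_pos_on
      (hgint 0 r (left_mem_Icc.mpr hR.le) ⟨hr.1.le, hr.2⟩) ?_ hr.1
    intro x hx
    have hxI : x ∈ Ioc (0:ℝ) R := ⟨hx.1, hx.2.le.trans hr.2⟩
    exact mul_pos (pow_pos (hwpos x hxI) _) (hu₁pos x ⟨hx.1.le, hxI.2⟩)
  intro a ha b hb hab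
  have haI : a ∈ Icc (0:ℝ) R := ⟨ha.1.le, ha.2⟩
  have hbI : b ∈ Icc (0:ℝ) R := ⟨hb.1.le, hb.2⟩
  have h0I : (0:ℝ) ∈ Icc (0:ℝ) R := left_mem_Icc.mpr hR.le
  set A : ℝ := ∫ s in (0:ℝ)..a, f s with hA
  set Ba : ℝ := ∫ s in (0:ℝ)..a, f s * u₁ s with hBa
  set C : ℝ := ∫ s in a..b, f s with hC
  set D : ℝ := ∫ s in a..b, f s * u₁ s with hD
  have hsub : ∀ s, s ∈ Icc a b → s ∈ Icc (0:ℝ) R :=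
    fun s hs => ⟨ha.1.le.trans hs.1, hs.2.trans hb.2⟩
  have hsub0 : ∀ s, s ∈ Icc (0:ℝ) a → s ∈ Icc (0:ℝ) R :=
    fun s hs => ⟨hs.1, hs.2.trans ha.2⟩
  -- A ≥ 0, C ≥ 0
  have hAnn : 0 ≤ A := by
    rw [hA]
    apply intervalIntegral.integral_nonneg ha.1.le
    intro s hs; exact hfnonneg s (hsub0 s hs)
  have hCnn : 0 ≤ C := by
    rw [hC]
    apply intervalIntegral.integral_nonneg hab
    intro s hs; exact hfnonneg s (hsub s hs)
  -- D ≤ u₁ a * C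
  have hDle : D ≤ u₁ a * C := by
    rw [hD, hC, ← intervalIntegral.integral_const_mul]
    apply intervalIntegral.integral_mono_on hab (hgint a b haI hbI)
      ((hfint a b haI hbI).const_mul _)
    intro s hs
    have hsI := hsub s hs
    have : u₁ s ≤ u₁ a := hu₁dec haI hsI hs.1
    have hfnn := hfnonneg s hsI
    nlinarith
  -- u₁ a * A ≤ Ba
  have hBage : u₁ a * A ≤ Ba := by
    rw [hBa, hA, ← intervalIntegral.integral_const_mul]
    apply intervalIntegral.integral_mono_on ha.1.le
      ((hfint 0 a h0I haI).const_mul _) (hgint 0 a h0I haI)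
    intro s hs
    have hsI := hsub0 s hs
    have : u₁ a ≤ u₁ s := hu₁dec hsI haI hs.2
    have hfnn := hfnonneg s hsI
    nlinarith
  have hBapos : 0 < Ba := hBpos a ha
  have hBbpos : 0 < ∫ s in (0:ℝ)..b, f s * u₁ s := hBpos b hb
  have hAb : (∫ s in (0:ℝ)..b, f s) = A + C := by
    rw [hA, hC]
    exact (intervalIntegral.integral_add_adjacent_intervals
      (hfint 0 a h0I haI) (hfint a b haI hbI)).symm
  have hBb : (∫ s in (0:ℝ)..b, f s * u₁ s) = Ba + D := by
    rw [hBa, hD]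
    exact (intervalIntegral.integral_add_adjacent_intervals
      (hgint 0 a h0I haI) (hgint a b haI hbI)).symm
  simp only
  rw [div_le_div_iff₀ hBapos hBbpos, hAb, hBb]
  have hu₁a : 0 < u₁ a := hu₁pos a haI
  nlinarith [mul_le_mul_of_nonneg_left hDle hAnn, mul_le_mul_of_nonneg_left hBage hCnn]
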